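/- A finite group H is nilpotent if and only if the diagonal homomorphism H → H × H, h ↦ (h,h), has the right lifting property with respect to every group homomorphism f : A → B that has the left lifting property with respect to the homomorphism 1 → G from the trivial group, for every group G. That is: H is nilpotent iff for every group homomorphism f : A → B such that (for all groups G, f ⧄ (1 → G)), one has f ⧄ (Δ : H → H × H). -/

import Mathlib

/-- `f` has the left lifting property with respect to `g` in the category of groups. -/
def GroupLift {A B X Y : Type*} [Group A] [Group B] [Group X] [Group Y]
    (f : A →* B) (g : X →* Y) : Prop :=
  ∀ (u : A →* X) (v : B →* Y), g.comp u = v.comp f →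
    ∃ w : B →* X, w.comp f = u ∧ g.comp w = v

universe w v2 v3 v4

open scoped commutatorElement

/-- If `f` has the left lifting property with respect to `1 → G` for all `G` in universe `w`,
then every homomorphism to a *finite* group (in any universe) killing `f` is trivial. -/
lemma groupLift_triv.{uu} {A B : Type*} [Group A] [Group B] (f : A →* B)
    (hf : ∀ (G : Type uu) [Group G], GroupLift f (1 : PUnit →* G))
    {Q : Type*} [Group Q] [Finite Q] (v : B →* Q) (hv : v.comp f = 1) : v = 1 := by
  let ε : Shrink.{uu} Q ≃* Q := Shrink.mulEquiv
  obtain ⟨w₀, -, hw₀⟩ := hf (Shrink.{uu} Q) 1 (ε.symm.toMonoidHom.comp v) (by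
    ext a
    have hva : v (f a) = 1 := by simpa using DFunLike.congr_fun hv a
    simp [hva])
  ext b
  have h1 := DFunLike.congr_fun hw₀ b
  have h2 : ε.symm (v b) = 1 := by simpa using h1.symm
  have h3 : v b = ε 1 := by rw [← h2, MulEquiv.apply_symm_apply]
  rw [h3, map_one]
  rfl

/-- The subgroup of `H × H` of pairs congruent modulo a normal subgroup `K`. -/
def pairSub {H : Type*} [Group H] (K : Subgroup H) [K.Normal] : Subgroup (H × H) where
  carrier := {p | p.1⁻¹ * p.2 ∈ K}
  one_mem' := by simpa using K.one_mem
  mul_mem' := by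
    rintro ⟨a, b⟩ ⟨c, d⟩ hab hcd
    simp only [Set.mem_setOf_eq] at *
    show (a * c)⁻¹ * (b * d) ∈ K
    have : (a * c)⁻¹ * (b * d) = (c⁻¹ * (a⁻¹ * b) * c) * (c⁻¹ * d) := by group
    rw [this]
    exact mul_mem (Subgroup.Normal.conj_mem' ‹K.Normal› _ hab c) hcd
  inv_mem' := by
    rintro ⟨a, b⟩ hab
    simp only [Set.mem_setOf_eq] at *
    show (a⁻¹)⁻¹ * b⁻¹ ∈ K
    have : (a⁻¹)⁻¹ * b⁻¹ = a * (a⁻¹ * b)⁻¹ * a⁻¹ := by group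
    rw [this]
    exact Subgroup.Normal.conj_mem ‹K.Normal› _ (inv_mem hab) a

@[simp] lemma mem_pairSub {H : Type*} [Group H] (K : Subgroup H) [K.Normal] (p : H × H) :
    p ∈ pairSub K ↔ p.1⁻¹ * p.2 ∈ K := Iff.rfl

/-- The diagonal element `(h, h)` of `pairSub K`. -/
def pairDiag {H : Type*} [Group H] (K : Subgroup H) [K.Normal] : H →* ↥(pairSub K) where
  toFun h := ⟨(h, h), by simpa using K.one_mem⟩
  map_one' := rfl
  map_mul' _ _ := rfl

/-- The element `(1, k)` of `pairSub K` for `k ∈ K`. -/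
def pairEl {H : Type*} [Group H] (K : Subgroup H) [K.Normal] (k : H) (hk : k ∈ K) :
    ↥(pairSub K) := ⟨(1, k), by simpa using hk⟩

/-- Forward direction: a nilpotent group's diagonal has the right lifting property. -/
lemma forward_aux {H : Type*} [Group H] [Finite H] (hH : Group.IsNilpotent H)
    {A B : Type*} [Group A] [Group B] (f : A →* B)
    (hf : ∀ (G : Type v4) [Group G], GroupLift f (1 : PUnit →* G)) :
    GroupLift f ((MonoidHom.id H).prod (MonoidHom.id H)) := by
  intro u v hsq
  set v₁ : B →* H := (MonoidHom.fst H H).comp v with hv₁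
  set v₂ : B →* H := (MonoidHom.snd H H).comp v with hv₂
  have hva : ∀ a : A, v (f a) = (u a, u a) := by
    intro a
    have := DFunLike.congr_fun hsq a
    simpa using this.symm
  have hv₁a : ∀ a : A, v₁ (f a) = u a := by intro a; simp [hv₁, hva a]
  have hv₂a : ∀ a : A, v₂ (f a) = u a := by intro a; simp [hv₂, hva a]
  have key : ∀ n, ∀ b : B, (v₁ b)⁻¹ * v₂ b ∈ Subgroup.lowerCentralSeries (⊤ : Subgroup H) n := by
    intro n
    induction n with
    | zero => intro b; rw [lowerCentralSeries_zero]; exact Subgroup.mem_top _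
    | succ n ih =>
      set N := Subgroup.lowerCentralSeries (⊤ : Subgroup H) (n + 1) with hN
      set π : H →* H ⧸ N := QuotientGroup.mk' N with hπ
      have hcentral : ∀ b : B, ∀ q : H ⧸ N, Commute (π ((v₁ b)⁻¹ * v₂ b)) q := by
        intro b q
        obtain ⟨h, rfl⟩ := QuotientGroup.mk'_surjective N q
        have hmem : ⁅(v₁ b)⁻¹ * v₂ b, h⁆ ∈ ⁅Subgroup.lowerCentralSeries (⊤ : Subgroup H) n, (⊤ : Subgroup H)⁆ :=
          Subgroup.commutator_mem_commutator (ih b) (Subgroup.mem_top h)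
        have hmem' : ⁅(v₁ b)⁻¹ * v₂ b, h⁆ ∈ N := hmem
        have h1 : π ⁅(v₁ b)⁻¹ * v₂ b, h⁆ = 1 := (QuotientGroup.eq_one_iff _).mpr hmem'
        rw [map_commutatorElement] at h1
        exact commutatorElement_eq_one_iff_commute.mp h1
      have hπmul : ∀ b : B, π ((v₁ b)⁻¹ * v₂ b) = (π (v₁ b))⁻¹ * π (v₂ b) := by
        intro b; rw [map_mul, map_inv]
      set δ : B →* H ⧸ N :=
        { toFun := fun b => (π (v₁ b))⁻¹ * π (v₂ b)
          map_one' := by simp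
          map_mul' := by
            intro b c
            have hcom := (hcentral b ((π (v₁ c))⁻¹)).eq
            rw [hπmul b] at hcom
            show (π (v₁ (b * c)))⁻¹ * π (v₂ (b * c))
                = (π (v₁ b))⁻¹ * π (v₂ b) * ((π (v₁ c))⁻¹ * π (v₂ c))
            rw [map_mul v₁, map_mul v₂, map_mul π, map_mul π, mul_inv_rev]
            calc (π (v₁ c))⁻¹ * (π (v₁ b))⁻¹ * (π (v₂ b) * π (v₂ c))
                = (π (v₁ c))⁻¹ * ((π (v₁ b))⁻¹ * π (v₂ b)) * π (v₂ c) := by group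
              _ = (π (v₁ b))⁻¹ * π (v₂ b) * (π (v₁ c))⁻¹ * π (v₂ c) := by rw [← hcom]
              _ = (π (v₁ b))⁻¹ * π (v₂ b) * ((π (v₁ c))⁻¹ * π (v₂ c)) := by
                  rw [mul_assoc] } with hδ
      have hδf : δ.comp f = 1 := by
        ext a
        simp only [hδ, MonoidHom.comp_apply, MonoidHom.coe_mk, OneHom.coe_mk,
          MonoidHom.one_apply, hv₁a a, hv₂a a]
        simp
      haveI : Finite (H ⧸ N) := Finite.of_surjective _ (QuotientGroup.mk'_surjective N)
      have hδ1 : δ = 1 := groupLift_triv f hf δ hδf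
      intro b
      have h1 : δ b = 1 := by rw [hδ1]; rfl
      have h2 : π ((v₁ b)⁻¹ * v₂ b) = 1 := by rw [hπmul b]; exact h1
      exact (QuotientGroup.eq_one_iff _).mp h2
  obtain ⟨n, hn⟩ := nilpotent_iff_lowerCentralSeries.mp hH
  have heq : ∀ b : B, v₁ b = v₂ b := by
    intro b
    have := key n b
    rw [hn, Subgroup.mem_bot] at this
    exact inv_mul_eq_one.mp this
  refine ⟨v₁, ?_, ?_⟩
  · ext a; exact hv₁a a
  · ext b : 1
    have : v b = (v₁ b, v₂ b) := rfl
    rw [this, ← heq b]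
    rfl

/-- Backward direction: the lifting property forces nilpotency of a finite group. -/
lemma backward_aux {H : Type*} [Group H] [Finite H]
    (hyp : ∀ (A : Type v2) (B : Type v3) [Group A] [Group B] (f : A →* B),
        (∀ (G : Type v4) [Group G], GroupLift f (1 : PUnit →* G)) →
          GroupLift f ((MonoidHom.id H).prod (MonoidHom.id H))) :
    Group.IsNilpotent H := by
  by_contra hnil
  have hstab : ∃ n, Subgroup.lowerCentralSeries (⊤ : Subgroup H) (n + 1) = Subgroup.lowerCentralSeries (⊤ : Subgroup H) n := by
    by_contra hc
    push_neg at hc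
    have hlt : ∀ n, Nat.card (Subgroup.lowerCentralSeries (⊤ : Subgroup H) (n + 1)) <
        Nat.card (Subgroup.lowerCentralSeries (⊤ : Subgroup H) n) := by
      intro n
      have hle : Subgroup.lowerCentralSeries (⊤ : Subgroup H) (n + 1) ≤ Subgroup.lowerCentralSeries (⊤ : Subgroup H) n :=
        lowerCentralSeries_antitone _ (Nat.le_succ n)
      have hss : (Subgroup.lowerCentralSeries (⊤ : Subgroup H) (n + 1) : Set H) ⊂ Subgroup.lowerCentralSeries (⊤ : Subgroup H) n :=
        ⟨hle, fun h => hc n (le_antisymm hle h)⟩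
      have := Set.ncard_lt_ncard hss (Set.toFinite _)
      rw [← Nat.card_coe_set_eq, ← Nat.card_coe_set_eq] at this; exact this
    have hbound : ∀ n, Nat.card (Subgroup.lowerCentralSeries (⊤ : Subgroup H) n) + n ≤
        Nat.card (Subgroup.lowerCentralSeries (⊤ : Subgroup H) 0) := by
      intro n
      induction n with
      | zero => simp
      | succ n ih =>
        have := hlt n
        omega
    have h0 : 0 < Nat.card (Subgroup.lowerCentralSeries (⊤ : Subgroup H) (Nat.card (Subgroup.lowerCentralSeries (⊤ : Subgroup H) 0) + 1)) :=
      Nat.card_pos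
    have := hbound (Nat.card (Subgroup.lowerCentralSeries (⊤ : Subgroup H) 0) + 1)
    omega
  obtain ⟨n, hn⟩ := hstab
  set K := Subgroup.lowerCentralSeries (⊤ : Subgroup H) n with hK
  have hKnormal : K.Normal := Subgroup.lowerCentralSeries_normal _ n
  have hKcomm : ⁅K, (⊤ : Subgroup H)⁆ = K := by
    rw [hK, show ⁅Subgroup.lowerCentralSeries (⊤ : Subgroup H) n, (⊤ : Subgroup H)⁆ = Subgroup.lowerCentralSeries (⊤ : Subgroup H) (n + 1)
      from rfl]
    exact hn
  have hKbot : K ≠ ⊥ := by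
    intro hbot
    exact hnil (nilpotent_iff_lowerCentralSeries.mpr ⟨n, hbot⟩)
  -- triviality of homomorphisms on `pairSub K` killing the diagonal
  have hvanish : ∀ (G : Type v4) [Group G] (v : ↥(pairSub K) →* G),
      (∀ h : H, v (pairDiag K h) = 1) → v = 1 := by
    intro G _ v hv
    have hconj : ∀ (k : H) (hk : k ∈ K) (h : H),
        v (pairEl K (h * k * h⁻¹) (hKnormal.conj_mem k hk h)) = v (pairEl K k hk) := by
      intro k hk h
      have heq : pairEl K (h * k * h⁻¹) (hKnormal.conj_mem k hk h)
          = pairDiag K h * pairEl K k hk * (pairDiag K h)⁻¹ := by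
        apply Subtype.ext
        show ((1 : H), h * k * h⁻¹) = ((h, h) : H × H) * (1, k) * ((h, h) : H × H)⁻¹
        simp [Prod.ext_iff]
      rw [heq, map_mul, map_mul, map_inv, hv h]
      simp
    have hinv : ∀ (k : H) (hk : k ∈ K),
        pairEl K k⁻¹ (inv_mem hk) = (pairEl K k hk)⁻¹ := by
      intro k hk
      apply Subtype.ext
      show ((1 : H), k⁻¹) = (((1 : H), k) : H × H)⁻¹
      simp
    have hmul : ∀ (k k' : H) (hk : k ∈ K) (hk' : k' ∈ K),
        pairEl K (k * k') (mul_mem hk hk') = pairEl K k hk * pairEl K k' hk' := by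
      intro k k' hk hk'
      apply Subtype.ext
      show ((1 : H), k * k') = (((1 : H), k) : H × H) * (1, k')
      simp
    set L : Subgroup H :=
      { carrier := {k | ∃ hk : k ∈ K, v (pairEl K k hk) = 1}
        one_mem' := ⟨K.one_mem, by
          have : pairEl K 1 K.one_mem = 1 := Subtype.ext rfl
          rw [this, map_one]⟩
        mul_mem' := by
          rintro k k' ⟨hk, hvk⟩ ⟨hk', hvk'⟩
          exact ⟨mul_mem hk hk', by rw [hmul k k' hk hk', map_mul, hvk, hvk', one_mul]⟩
        inv_mem' := by
          rintro k ⟨hk, hvk⟩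
          exact ⟨inv_mem hk, by rw [hinv k hk, map_inv, hvk, inv_one]⟩ } with hL
    have hKL : K ≤ L := by
      conv_lhs => rw [← hKcomm]
      rw [Subgroup.commutator_le]
      intro p hp q hq
      refine ⟨hKcomm ▸ Subgroup.commutator_mem_commutator hp hq, ?_⟩
      have hdecomp : ⁅p, q⁆ = p * (q * p⁻¹ * q⁻¹) := by
        rw [commutatorElement_def]; group
      have hmem2 : q * p⁻¹ * q⁻¹ ∈ K := hKnormal.conj_mem p⁻¹ (inv_mem hp) q
      have e1 : pairEl K ⁅p, q⁆ (hKcomm ▸ Subgroup.commutator_mem_commutator hp hq)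
          = pairEl K p hp * pairEl K (q * p⁻¹ * q⁻¹) hmem2 := by
        apply Subtype.ext
        show ((1 : H), ⁅p, q⁆) = (((1 : H), p) : H × H) * (1, q * p⁻¹ * q⁻¹)
        simp [hdecomp, Prod.ext_iff]
      rw [e1, map_mul, hconj p⁻¹ (inv_mem hp) q, hinv p hp, map_inv]
      simp
    ext x
    obtain ⟨⟨a, b⟩, hab⟩ := x
    have hab' : a⁻¹ * b ∈ K := hab
    have hx : (⟨(a, b), hab⟩ : ↥(pairSub K)) = pairDiag K a * pairEl K (a⁻¹ * b) hab' := by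
      apply Subtype.ext
      show ((a, b) : H × H) = ((a, a) : H × H) * (1, a⁻¹ * b)
      simp [Prod.ext_iff]
    obtain ⟨hk, hvk⟩ := hKL hab'
    rw [hx, map_mul, hv a, one_mul]
    show v (pairEl K (a⁻¹ * b) hab') = 1
    exact hvk
  -- transport into the universes of the hypothesis
  let εA : Shrink.{v2} H ≃* H := Shrink.mulEquiv
  let εB : Shrink.{v3} ↥(pairSub K) ≃* ↥(pairSub K) := Shrink.mulEquiv
  let f' : Shrink.{v2} H →* Shrink.{v3} ↥(pairSub K) :=
    εB.symm.toMonoidHom.comp ((pairDiag K).comp εA.toMonoidHom)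
  have hprop : ∀ (G : Type v4) [Group G], GroupLift f' (1 : PUnit →* G) := by
    intro G _ u₀ v hsq
    have hv : ∀ h : H, (v.comp εB.symm.toMonoidHom) (pairDiag K h) = 1 := by
      intro h
      have h1 := DFunLike.congr_fun hsq (εA.symm h)
      simp only [MonoidHom.comp_apply, MonoidHom.one_apply] at h1 ⊢
      have : f' (εA.symm h) = εB.symm (pairDiag K h) := by
        simp [f']
      have h2 : v (f' (εA.symm h)) = 1 := h1.symm
      rw [this] at h2
      exact h2
    have hv1 := hvanish G (v.comp εB.symm.toMonoidHom) hv
    refine ⟨1, MonoidHom.ext fun a => Subsingleton.elim _ _, ?_⟩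
    ext b
    have : v (εB.symm (εB b)) = 1 := by
      have := DFunLike.congr_fun hv1 (εB b)
      simpa using this
    simpa using this.symm
  obtain ⟨w, -, hw⟩ := hyp _ _ f' hprop εA.toMonoidHom
    ((pairSub K).subtype.comp εB.toMonoidHom) (by
      ext a : 1
      show ((εA a, εA a) : H × H) = ((εB (f' a) : H × H))
      have : εB (f' a) = pairDiag K (εA a) := by simp [f']
      rw [this]
      rfl)
  obtain ⟨k, hkK, hk1⟩ := K.bot_or_exists_ne_one.resolve_left hKbot
  have hx := DFunLike.congr_fun hw (εB.symm (pairEl K k hkK))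
  have h1 : ((w (εB.symm (pairEl K k hkK)), w (εB.symm (pairEl K k hkK))) : H × H)
      = ((1 : H), k) := by
    simpa [pairEl] using hx
  have ha : w (εB.symm (pairEl K k hkK)) = 1 := congrArg Prod.fst h1
  have hb : w (εB.symm (pairEl K k hkK)) = k := congrArg Prod.snd h1
  exact hk1 (hb.symm.trans ha)

/-- A finite group `H` is nilpotent iff the diagonal `H → H × H` has the right lifting
property with respect to every homomorphism having the left lifting property with
respect to `1 → G` for every group `G`. -/
theorem stmt0 {H : Type*} [Group H] [Finite H] :
    Group.IsNilpotent H ↔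
      ∀ (A B : Type*) [Group A] [Group B] (f : A →* B),
        (∀ (G : Type*) [Group G], GroupLift f (1 : PUnit →* G)) →
          GroupLift f ((MonoidHom.id H).prod (MonoidHom.id H)) := by
  constructor
  · intro hH A B _ _ f hf
    exact forward_aux hH f hf
  · intro hyp
    exact backward_aux hyp
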